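/- With the same setup (E invertible, D invertible diagonal, Λ₂ = ½(Θ^{-1})ᵀΓΘ^{-1}, Ẽ = (D^{-1}E; −Iₙ)): for all α,β ∈ ℚⁿ, (Ẽα)ᵀ Λ₂ (Ẽβ) = ½(⟨β,α⟩ − ⟨α,β⟩), where ⟨x,y⟩ = xᵀEy. -/

import Mathlib

open Matrix

/-- With `Λ₂ = ½(Θ⁻¹)ᵀΓΘ⁻¹` and `Ẽ = (D⁻¹E; −Iₙ)`:
`(Ẽα)ᵀ Λ₂ (Ẽβ) = ½(⟨β,α⟩ − ⟨α,β⟩)` where `⟨x,y⟩ = xᵀEy`. -/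
theorem Lambda_two_pairing_E_E (n : ℕ) (E : Matrix (Fin n) (Fin n) ℚ)
    (hE : IsUnit E.det) (d : Fin n → ℚ) (hd : ∀ i, d i ≠ 0) (α β : Fin n → ℚ) :
    let D := Matrix.diagonal d
    let Θ := Matrix.fromBlocks (-(D⁻¹ * E)) (-(D⁻¹ * Eᵀ))
      (1 : Matrix (Fin n) (Fin n) ℚ) (0 : Matrix (Fin n) (Fin n) ℚ)
    let Γ := Matrix.fromBlocks (Eᵀ - E) (-Eᵀ - E) (Eᵀ + E) (Eᵀ - E)
    let Λ₂ := (1 / 2 : ℚ) • ((Θ⁻¹)ᵀ * Γ * Θ⁻¹)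
    let Etil := Matrix.fromRows (D⁻¹ * E) (-(1 : Matrix (Fin n) (Fin n) ℚ))
    (Etil *ᵥ α) ⬝ᵥ (Λ₂ *ᵥ (Etil *ᵥ β)) =
      (1 / 2 : ℚ) * (β ⬝ᵥ (E *ᵥ α) - α ⬝ᵥ (E *ᵥ β)) := by
  intro D Θ Γ Λ₂ Etil
  have hD : IsUnit D.det := by
    simp only [D, Matrix.det_diagonal]
    exact IsUnit.mk0 _ (Finset.prod_ne_zero_iff.mpr fun i _ => hd i)
  have hEt : IsUnit (Eᵀ).det := by rwa [Matrix.det_transpose]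
  have hDD : D * D⁻¹ = 1 := Matrix.mul_nonsing_inv _ hD
  have hDD' : D⁻¹ * D = 1 := Matrix.nonsing_inv_mul _ hD
  have hEE : Eᵀ * (Eᵀ)⁻¹ = 1 := Matrix.mul_nonsing_inv _ hEt
  set Ψ : Matrix (Fin n ⊕ Fin n) (Fin n ⊕ Fin n) ℚ :=
    Matrix.fromBlocks 0 1 (-((Eᵀ)⁻¹ * D)) (-((Eᵀ)⁻¹ * E)) with hΨdef
  have hΘΨ : Θ * Ψ = 1 := by
    simp only [Θ, Ψ, Matrix.fromBlocks_multiply, Matrix.mul_zero, Matrix.zero_mul,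
      Matrix.mul_one, Matrix.one_mul, Matrix.mul_neg, Matrix.neg_mul, neg_neg,
      zero_add, add_zero, neg_zero]
    rw [show D⁻¹ * Eᵀ * ((Eᵀ)⁻¹ * D) = D⁻¹ * (Eᵀ * (Eᵀ)⁻¹) * D by
          rw [Matrix.mul_assoc, Matrix.mul_assoc, Matrix.mul_assoc],
        hEE, Matrix.mul_one, hDD',
        show D⁻¹ * Eᵀ * ((Eᵀ)⁻¹ * E) = D⁻¹ * (Eᵀ * (Eᵀ)⁻¹) * E by
          rw [Matrix.mul_assoc, Matrix.mul_assoc, Matrix.mul_assoc],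
        hEE, Matrix.mul_one]
    simp [← Matrix.fromBlocks_one]
  have hΘ : IsUnit Θ.det := Matrix.isUnit_det_of_right_inverse hΘΨ
  have hΘinv : Θ⁻¹ = Ψ := Matrix.inv_eq_right_inv hΘΨ
  -- Ψ * Etil = fromRows (-1) 0
  have hΨE : Ψ * Etil = Matrix.fromRows (-(1 : Matrix (Fin n) (Fin n) ℚ)) 0 := by
    simp only [Ψ, Etil, Matrix.fromBlocks_mul_fromRows, Matrix.zero_mul, Matrix.one_mul,
      Matrix.mul_neg, Matrix.neg_mul, Matrix.mul_one, neg_neg, zero_add]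
    rw [show (Eᵀ)⁻¹ * D * (D⁻¹ * E) = (Eᵀ)⁻¹ * (D * D⁻¹) * E by
          rw [Matrix.mul_assoc, Matrix.mul_assoc, Matrix.mul_assoc],
        hDD, Matrix.mul_one]
    simp
  -- key matrix identity
  have key : Etilᵀ * Λ₂ * Etil = (1 / 2 : ℚ) • (Eᵀ - E) := by
    have h1 : Etilᵀ * Λ₂ * Etil
        = (1 / 2 : ℚ) • ((Ψ * Etil)ᵀ * Γ * (Ψ * Etil)) := by
      simp only [Λ₂, hΘinv, Matrix.mul_smul, Matrix.smul_mul, Matrix.transpose_mul]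
      rw [show Etilᵀ * (Ψᵀ * Γ * Ψ) * Etil = (Etilᵀ * Ψᵀ) * Γ * (Ψ * Etil) by
        simp only [Matrix.mul_assoc]]
    rw [h1, hΨE]
    rw [show (Matrix.fromRows (-(1 : Matrix (Fin n) (Fin n) ℚ)) 0)ᵀ
        = Matrix.fromCols (-(1 : Matrix (Fin n) (Fin n) ℚ)) 0 by
      simp [Matrix.transpose_fromRows]]
    rw [Matrix.mul_assoc, show Γ * Matrix.fromRows (-(1 : Matrix (Fin n) (Fin n) ℚ)) (0 : Matrix (Fin n) (Fin n) ℚ)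
        = Matrix.fromRows (-(Eᵀ - E)) (-(Eᵀ + E)) by
      simp [Γ, Matrix.fromBlocks_mul_fromRows]]
    rw [Matrix.fromCols_mul_fromRows]
    simp
  -- finish
  have hstep : (Etil *ᵥ α) ⬝ᵥ (Λ₂ *ᵥ (Etil *ᵥ β))
      = α ⬝ᵥ ((Etilᵀ * Λ₂ * Etil) *ᵥ β) := by
    rw [Matrix.mulVec_mulVec, ← Matrix.vecMul_transpose, Matrix.dotProduct_mulVec,
      Matrix.vecMul_vecMul, ← Matrix.dotProduct_mulVec, Matrix.mul_assoc,
      ← Matrix.mul_assoc]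
  rw [hstep, key]
  rw [Matrix.smul_mulVec, dotProduct_smul, Matrix.sub_mulVec,
    dotProduct_sub]
  rw [show α ⬝ᵥ (Eᵀ *ᵥ β) = β ⬝ᵥ (E *ᵥ α) by
    rw [Matrix.mulVec_transpose, dotProduct_comm, Matrix.dotProduct_mulVec]]
  simp [smul_eq_mul]
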